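/- arXiv:1512.01466 — 5 statements merged into one kernel-verified Lean document; each statement's English description precedes it below -/
import Mathlib

section
/- Let $f_1, f_2$ be $k$-periodic functions from $\mathbb{Z}$ to $\mathbb{C}$ and let $h_1, h_2 \in \mathbb{Z}$ with $\gcd(h_1,k) = \gcd(h_2,k) = 1$. Then $\sum_{a=0}^{k-1} f_1(a h_1) f_2(a h_2) = \frac{1}{k} \sum_{a=0}^{k-1} \widehat{f_1}(-a h_2) \widehat{f_2}(a h_1)$. -/
open Finset Complex

/-- Discrete Fourier transform of a `k`-periodic function `f : ℤ → ℂ`. -/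
noncomputable def dft (k : ℕ) (f : ℤ → ℂ) (n : ℤ) : ℂ :=
  ∑ a ∈ Finset.range k, f a * Complex.exp (-(2 * (Real.pi : ℂ) * Complex.I * a * n) / k)

lemma sum_range_zmod {k : ℕ} [NeZero k] (g : ℕ → ℂ) :
    ∑ a ∈ Finset.range k, g a = ∑ x : ZMod k, g (ZMod.val x) := by
  refine Finset.sum_nbij' (fun a => (a : ZMod k)) (fun x => x.val) ?_ ?_ ?_ ?_ ?_
  · intro a _; exact Finset.mem_univ _
  · intro x _; exact Finset.mem_range.mpr (ZMod.val_lt x)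
  · intro a ha; exact ZMod.val_cast_of_lt (Finset.mem_range.mp ha)
  · intro x _; simp [ZMod.natCast_val, ZMod.cast_id]
  · intro a ha; rw [ZMod.val_cast_of_lt (Finset.mem_range.mp ha)]

lemma periodic_cong {k : ℕ} (f : ℤ → ℂ) (hf : ∀ n : ℤ, f (n + k) = f n)
    (n m : ℤ) (h : (k : ℤ) ∣ n - m) : f n = f m := by
  have key : ∀ t : ℤ, ∀ m : ℤ, f (m + t * k) = f m := by
    intro t
    induction t using Int.induction_on with
    | zero => intro m; simp
    | succ i ih =>
        intro m
        have h1 : m + ((i : ℤ) + 1) * k = (m + i * k) + k := by ring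
        rw [h1, hf, ih]
    | pred i ih =>
        intro m
        have h1 : m + (-(i : ℤ) - 1) * k + k = m + (-(i:ℤ)) * k := by ring
        have := hf (m + (-(i:ℤ) - 1) * k)
        rw [h1] at this
        rw [← ih m, ← this]
  obtain ⟨t, ht⟩ := h
  have hn : n = m + t * k := by linarith
  rw [hn, key]

lemma char_sum {k : ℕ} (hk : 0 < k) (m : ℤ) :
    ∑ a ∈ Finset.range k, Complex.exp (2 * (Real.pi : ℂ) * Complex.I * a * m / k)
      = if (k : ℤ) ∣ m then (k : ℂ) else 0 := by
  have hk0 : (k : ℂ) ≠ 0 := Nat.cast_ne_zero.mpr hk.ne'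
  set ζ : ℂ := Complex.exp (2 * (Real.pi : ℂ) * Complex.I * m / k) with hζ
  have hpow : ∀ a : ℕ, Complex.exp (2 * (Real.pi : ℂ) * Complex.I * a * m / k) = ζ ^ a := by
    intro a
    rw [hζ, ← Complex.exp_nat_mul]
    congr 1
    ring
  simp_rw [hpow]
  by_cases hdvd : (k : ℤ) ∣ m
  · obtain ⟨t, ht⟩ := hdvd
    have hζ1 : ζ = 1 := by
      rw [hζ, ht]
      have h2 : ((((k:ℤ) * t : ℤ)) : ℂ) = (k : ℂ) * (t : ℤ) := by push_cast; ring
      rw [h2]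
      have h3 : 2 * (Real.pi : ℂ) * Complex.I * ((k:ℂ) * (t:ℤ)) / k = (t:ℤ) * (2 * Real.pi * Complex.I) := by
        field_simp
      rw [h3, Complex.exp_int_mul_two_pi_mul_I]
    rw [if_pos ⟨t, ht⟩, Finset.sum_congr rfl fun x _ => by rw [hζ1, one_pow]]
    simp
  · have hζ1 : ζ ≠ 1 := by
      intro h
      rw [hζ, Complex.exp_eq_one_iff] at h
      obtain ⟨n, hn⟩ := h
      apply hdvd
      refine ⟨n, ?_⟩
      have hpi : (Real.pi : ℂ) ≠ 0 := Complex.ofReal_ne_zero.mpr Real.pi_ne_zero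
      have hI : Complex.I ≠ 0 := Complex.I_ne_zero
      have : (m : ℂ) = (k : ℂ) * n := by
        have h2 : (2:ℂ) * Real.pi * Complex.I ≠ 0 := by
          simp [hpi, hI]
        field_simp at hn
        apply mul_left_cancel₀ h2
        linear_combination (2 * (Real.pi : ℂ) * Complex.I) * hn
      exact_mod_cast this
    have hζk : ζ ^ k = 1 := by
      rw [hζ, ← Complex.exp_nat_mul]
      have : (k : ℂ) * (2 * (Real.pi : ℂ) * Complex.I * m / k) = m * (2 * Real.pi * Complex.I) := by
        field_simp
      rw [this, Complex.exp_int_mul_two_pi_mul_I]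
    rw [geom_sum_eq hζ1, hζk]
    rw [if_neg hdvd]
    simp

lemma val_cong {k : ℕ} [NeZero k] (x : ZMod k) (n : ℤ) (h : (n : ZMod k) = x) :
    (k : ℤ) ∣ n - (x.val : ℤ) := by
  have h0 : ((n - (x.val : ℤ) : ℤ) : ZMod k) = 0 := by
    push_cast
    rw [h, ZMod.natCast_val, ZMod.cast_id, sub_self]
  exact (ZMod.intCast_zmod_eq_zero_iff_dvd _ _).mp h0

theorem parseval_two (k : ℕ) (hk : 0 < k) (f₁ f₂ : ℤ → ℂ)
    (hf₁ : ∀ n, f₁ (n + k) = f₁ n) (hf₂ : ∀ n, f₂ (n + k) = f₂ n)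
    (h₁ h₂ : ℤ) (hco₁ : Int.gcd h₁ k = 1) (hco₂ : Int.gcd h₂ k = 1) :
    ∑ a ∈ Finset.range k, f₁ (a * h₁) * f₂ (a * h₂)
      = (1 / k) * ∑ a ∈ Finset.range k, dft k f₁ (-(a : ℤ) * h₂) * dft k f₂ ((a : ℤ) * h₁) := by
  haveI : NeZero k := ⟨hk.ne'⟩
  have hk0 : (k : ℂ) ≠ 0 := Nat.cast_ne_zero.mpr hk.ne'
  obtain ⟨u, v, huv⟩ : ∃ u v : ℤ, u * h₁ + v * k = 1 := by
    obtain ⟨u, v, h⟩ := Int.isCoprime_iff_gcd_eq_one.mpr hco₁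
    exact ⟨u, v, h⟩
  set H₁ : ZMod k := (h₁ : ZMod k) with hH₁
  set H₂ : ZMod k := (h₂ : ZMod k) with hH₂
  set U : ZMod k := (u : ZMod k) with hU'
  have hU : U * H₁ = 1 := by
    have : ((u * h₁ + v * k : ℤ) : ZMod k) = 1 := by rw [huv]; norm_cast
    push_cast at this
    rwa [ZMod.natCast_self, mul_zero, add_zero] at this
  -- Step 1: expand the product of dfts
  have hprod : ∀ a : ℕ,
      dft k f₁ (-(a : ℤ) * h₂) * dft k f₂ ((a : ℤ) * h₁)
        = ∑ b ∈ Finset.range k, ∑ c ∈ Finset.range k,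
            f₁ b * f₂ c * Complex.exp (2 * (Real.pi : ℂ) * Complex.I * a
              * (((b : ℤ) * h₂ - (c : ℤ) * h₁ : ℤ) : ℂ) / k) := by
    intro a
    unfold dft
    rw [Finset.sum_mul_sum]
    refine Finset.sum_congr rfl fun b _ => Finset.sum_congr rfl fun c _ => ?_
    rw [mul_mul_mul_comm]
    congr 1
    rw [← Complex.exp_add]
    congr 1
    push_cast
    field_simp
    ring
  -- Step 2: compute the big sum
  have hsum : ∑ a ∈ Finset.range k, dft k f₁ (-(a : ℤ) * h₂) * dft k f₂ ((a : ℤ) * h₁)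
      = ∑ b ∈ Finset.range k, ∑ c ∈ Finset.range k, f₁ b * f₂ c
          * (if (k : ℤ) ∣ ((b : ℤ) * h₂ - (c : ℤ) * h₁) then (k : ℂ) else 0) := by
    calc ∑ a ∈ Finset.range k, dft k f₁ (-(a : ℤ) * h₂) * dft k f₂ ((a : ℤ) * h₁)
        = ∑ a ∈ Finset.range k, ∑ b ∈ Finset.range k, ∑ c ∈ Finset.range k,
            f₁ b * f₂ c * Complex.exp (2 * (Real.pi : ℂ) * Complex.I * a
              * (((b : ℤ) * h₂ - (c : ℤ) * h₁ : ℤ) : ℂ) / k) :=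
          Finset.sum_congr rfl fun a _ => hprod a
      _ = ∑ b ∈ Finset.range k, ∑ c ∈ Finset.range k, ∑ a ∈ Finset.range k,
            f₁ b * f₂ c * Complex.exp (2 * (Real.pi : ℂ) * Complex.I * a
              * (((b : ℤ) * h₂ - (c : ℤ) * h₁ : ℤ) : ℂ) / k) := by
          rw [Finset.sum_comm]
          exact Finset.sum_congr rfl fun b _ => Finset.sum_comm
      _ = _ := by
          refine Finset.sum_congr rfl fun b _ => Finset.sum_congr rfl fun c _ => ?_
          rw [← Finset.mul_sum, ← char_sum hk]
  rw [hsum]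
  -- Step 3: rewrite divisibility as an equation in ZMod k
  have hdvd_iff : ∀ b c : ℕ, ((k : ℤ) ∣ ((b : ℤ) * h₂ - (c : ℤ) * h₁))
      ↔ ((b : ZMod k) * H₂ = (c : ZMod k) * H₁) := by
    intro b c
    rw [← ZMod.intCast_zmod_eq_zero_iff_dvd]
    push_cast
    rw [sub_eq_zero, hH₁, hH₂]
  -- Step 4: convert both sides to sums over ZMod k
  have hL : ∑ a ∈ Finset.range k, f₁ ((a : ℤ) * h₁) * f₂ ((a : ℤ) * h₂)
      = ∑ x : ZMod k, f₁ (((x * H₁).val : ℤ)) * f₂ (((x * H₂).val : ℤ)) := by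
    rw [sum_range_zmod (k := k) (fun a => f₁ ((a : ℤ) * h₁) * f₂ ((a : ℤ) * h₂))]
    refine Finset.sum_congr rfl fun x _ => ?_
    have e1 : f₁ ((x.val : ℤ) * h₁) = f₁ (((x * H₁).val : ℤ)) := by
      refine periodic_cong f₁ hf₁ _ _ (val_cong _ _ ?_)
      push_cast
      rw [ZMod.natCast_val, ZMod.cast_id, hH₁]
    have e2 : f₂ ((x.val : ℤ) * h₂) = f₂ (((x * H₂).val : ℤ)) := by
      refine periodic_cong f₂ hf₂ _ _ (val_cong _ _ ?_)
      push_cast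
      rw [ZMod.natCast_val, ZMod.cast_id, hH₂]
    rw [e1, e2]
  have hR : ∑ b ∈ Finset.range k, ∑ c ∈ Finset.range k, f₁ b * f₂ c
        * (if (k : ℤ) ∣ ((b : ℤ) * h₂ - (c : ℤ) * h₁) then (k : ℂ) else 0)
      = ∑ x : ZMod k, ∑ y : ZMod k, f₁ (x.val : ℤ) * f₂ (y.val : ℤ)
          * (if x * H₂ = y * H₁ then (k : ℂ) else 0) := by
    rw [sum_range_zmod (k := k)]
    refine Finset.sum_congr rfl fun x _ => ?_
    rw [sum_range_zmod (k := k)]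
    refine Finset.sum_congr rfl fun y _ => ?_
    congr 1
    have hx : ((x.val : ZMod k)) = x := by rw [ZMod.natCast_val, ZMod.cast_id]
    have hy : ((y.val : ZMod k)) = y := by rw [ZMod.natCast_val, ZMod.cast_id]
    have hiff : ((k : ℤ) ∣ ((x.val : ℤ) * h₂ - (y.val : ℤ) * h₁)) ↔ (x * H₂ = y * H₁) := by
      rw [hdvd_iff x.val y.val, hx, hy]
    exact if_congr hiff rfl rfl
  rw [hR]
  -- Step 5: evaluate inner sum
  have hinner : ∀ x : ZMod k, ∑ y : ZMod k, f₁ (x.val : ℤ) * f₂ (y.val : ℤ)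
        * (if x * H₂ = y * H₁ then (k : ℂ) else 0)
      = f₁ (x.val : ℤ) * f₂ (((x * H₂ * U).val : ℤ)) * k := by
    intro x
    have hcond : ∀ y : ZMod k, (x * H₂ = y * H₁) ↔ (y = x * H₂ * U) := by
      intro y
      constructor
      · intro h
        calc y = y * (H₁ * U) := by rw [mul_comm H₁ U, hU, mul_one]
          _ = (y * H₁) * U := by ring
          _ = x * H₂ * U := by rw [← h]
      · intro h
        rw [h]
        calc x * H₂ = x * H₂ * (U * H₁) := by rw [hU, mul_one]
          _ = x * H₂ * U * H₁ := by ring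
    calc ∑ y : ZMod k, f₁ (x.val : ℤ) * f₂ (y.val : ℤ)
          * (if x * H₂ = y * H₁ then (k : ℂ) else 0)
        = ∑ y : ZMod k, (if y = x * H₂ * U then f₁ (x.val : ℤ) * f₂ (y.val : ℤ) * k else 0) := by
          refine Finset.sum_congr rfl fun y _ => ?_
          rw [mul_ite, mul_zero]
          exact if_congr (hcond y) rfl rfl
      _ = f₁ (x.val : ℤ) * f₂ (((x * H₂ * U).val : ℤ)) * k := by
          rw [Finset.sum_ite_eq' Finset.univ (x * H₂ * U)
            (fun y => f₁ (x.val : ℤ) * f₂ (y.val : ℤ) * (k : ℂ))]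
          simp
  simp_rw [hinner]
  -- Step 6: reindex LHS via x ↦ x * H₁
  rw [hL, Finset.mul_sum]
  have hbij : Function.Bijective (fun x : ZMod k => x * H₁) := by
    constructor
    · intro x y h
      simp only at h
      calc x = x * (H₁ * U) := by rw [mul_comm H₁ U, hU, mul_one]
        _ = (x * H₁) * U := by ring
        _ = (y * H₁) * U := by rw [h]
        _ = y * (H₁ * U) := by ring
        _ = y := by rw [mul_comm H₁ U, hU, mul_one]
    · intro y
      exact ⟨y * U, by simp only; calc y * U * H₁ = y * (U * H₁) := by ring
        _ = y := by rw [hU, mul_one]⟩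
  rw [Fintype.sum_bijective _ hbij _
    (fun x => f₁ (x.val : ℤ) * f₂ (((x * H₂ * U).val : ℤ)))
    (fun x => by
      beta_reduce
      have hrw : x * H₁ * H₂ * U = x * H₂ := by
        calc x * H₁ * H₂ * U = x * H₂ * (U * H₁) := by ring
          _ = x * H₂ := by rw [hU, mul_one]
      rw [hrw])]
  refine Finset.sum_congr rfl fun x _ => ?_
  field_simp
end

section
/- Let $k \in \mathbb{N}$ and let $f(n) = ((n/k))$ be the $k$-periodic sawtooth function. Then the DFT of $f$ satisfies $\widehat{f}(n) = \frac{i}{2} \cot(\pi n / k)$ if $k \nmid n$, and $\widehat{f}(n) = 0$ if $k \mid n$. -/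
open scoped Classical

/-- The sawtooth function `((x))`. -/
noncomputable def saw (x : ℝ) : ℝ :=
  if ∃ m : ℤ, x = m then 0 else Int.fract x - 1 / 2

lemma aux_mul_sum (w : ℂ) (k : ℕ) :
    (w - 1) * ∑ a ∈ Finset.range k, (a : ℂ) * w ^ a
      = ((k : ℂ) - 1) * w ^ k - (∑ a ∈ Finset.range k, w ^ a) + 1 := by
  induction k with
  | zero => simp
  | succ k ih =>
    rw [Finset.sum_range_succ, Finset.sum_range_succ]
    push_cast
    ring_nf
    ring_nf at ih
    linear_combination ih

lemma saw_zero : saw 0 = 0 := by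
  rw [saw, if_pos ⟨0, by simp⟩]

lemma saw_div (k a : ℕ) (h1 : 0 < a) (h2 : a < k) :
    saw ((a : ℝ) / k) = (a : ℝ) / k - 1 / 2 := by
  have hk : 0 < k := lt_trans h1 h2
  rw [saw, if_neg, Int.fract_eq_self.mpr]
  · constructor
    · positivity
    · rw [div_lt_one (by exact_mod_cast hk)]; exact_mod_cast h2
  · rintro ⟨m, hm⟩
    rw [div_eq_iff (by exact_mod_cast hk.ne' : (k : ℝ) ≠ 0)] at hm
    have hm' : (a : ℤ) = m * k := by exact_mod_cast hm
    have hmpos : 0 < m := by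
      by_contra h
      push_neg at h
      have : m * (k : ℤ) ≤ 0 := mul_nonpos_of_nonpos_of_nonneg h (by positivity)
      omega
    have : (k : ℤ) ≤ m * k := le_mul_of_one_le_left (by positivity) hmpos
    omega

/-- The value of `saw (a / k)` for `a ∈ range k`, with the `a = 0` correction term. -/
lemma saw_div_range (k a : ℕ) (hk : 0 < k) (ha : a < k) :
    saw ((a : ℝ) / k) = (a : ℝ) / k - 1 / 2 + (if a = 0 then (1 / 2 : ℝ) else 0) := by
  rcases Nat.eq_zero_or_pos a with h | h
  · subst h
    simp [saw_zero]
  · rw [saw_div k a h ha, if_neg h.ne']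
    ring

lemma gauss_real (k : ℕ) : ∑ a ∈ Finset.range k, (a : ℝ) = k * (k - 1) / 2 := by
  induction k with
  | zero => simp
  | succ k ih =>
    rw [Finset.sum_range_succ, ih]
    push_cast
    ring

theorem dft_saw (k : ℕ) (hk : 0 < k) (n : ℤ) :
    dft k (fun m => (saw ((m : ℝ) / k) : ℂ)) n =
      if (k : ℤ) ∣ n then 0
      else (Complex.I / 2) *
        ((Real.cos (Real.pi * n / k) / Real.sin (Real.pi * n / k) : ℝ) : ℂ) := by
  have hKR : (k : ℝ) ≠ 0 := by positivity
  have hKC : (k : ℂ) ≠ 0 := by exact_mod_cast hKR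
  rw [dft]
  simp only [Int.cast_natCast]
  by_cases hdvd : (k : ℤ) ∣ n
  · rw [if_pos hdvd]
    obtain ⟨m, rfl⟩ := hdvd
    have hexp : ∀ a : ℕ,
        Complex.exp (-(2 * (Real.pi : ℂ) * Complex.I * (a : ℂ) * (((k : ℤ) * m : ℤ) : ℂ)) / (k : ℂ)) = 1 := by
      intro a
      have h1 : -(2 * (Real.pi : ℂ) * Complex.I * (a : ℂ) * (((k : ℤ) * m : ℤ) : ℂ)) / (k : ℂ)
          = ((-(a : ℤ) * m : ℤ) : ℂ) * (2 * Real.pi * Complex.I) := by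
        rw [div_eq_iff hKC]
        push_cast
        ring
      rw [h1, Complex.exp_int_mul_two_pi_mul_I]
    simp only [hexp, mul_one]
    have hcast : ∑ a ∈ Finset.range k, ((saw ((a : ℝ) / k) : ℝ) : ℂ)
        = ((∑ a ∈ Finset.range k, saw ((a : ℝ) / k) : ℝ) : ℂ) := by push_cast; rfl
    rw [hcast]
    have hsum : ∑ a ∈ Finset.range k, saw ((a : ℝ) / k) = 0 := by
      have h1 : ∀ a ∈ Finset.range k, saw ((a : ℝ) / k)
          = (a : ℝ) / k - 1 / 2 + (if a = 0 then (1 / 2 : ℝ) else 0) := fun a ha =>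
        saw_div_range k a hk (Finset.mem_range.mp ha)
      rw [Finset.sum_congr rfl h1]
      rw [Finset.sum_add_distrib, Finset.sum_sub_distrib, ← Finset.sum_div, gauss_real]
      rw [Finset.sum_ite_eq' (Finset.range k) 0 (fun _ => (1 / 2 : ℝ))]
      simp only [Finset.mem_range, hk, if_pos, Finset.sum_const, Finset.card_range,
        nsmul_eq_mul]
      field_simp
      ring
    rw [hsum]
    simp
  · rw [if_neg hdvd]
    set w : ℂ := Complex.exp (-(2 * (Real.pi : ℂ) * Complex.I * n) / k) with hw
    have hexp : ∀ a : ℕ,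
        Complex.exp (-(2 * (Real.pi : ℂ) * Complex.I * a * n) / k) = w ^ a := by
      intro a
      rw [hw, ← Complex.exp_nat_mul]
      congr 1
      ring
    simp only [hexp]
    have hwk : w ^ k = 1 := by
      rw [hw, ← Complex.exp_nat_mul]
      have h1 : (k : ℂ) * (-(2 * (Real.pi : ℂ) * Complex.I * n) / k)
          = ((-n : ℤ) : ℂ) * (2 * Real.pi * Complex.I) := by
        rw [mul_comm, div_mul_cancel₀ _ hKC]
        push_cast
        ring
      rw [h1, Complex.exp_int_mul_two_pi_mul_I]
    have hπ : (2 : ℂ) * Real.pi * Complex.I ≠ 0 := by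
      simp [Real.pi_ne_zero, Complex.I_ne_zero]
    have hw1 : w ≠ 1 := by
      intro h
      rw [hw, Complex.exp_eq_one_iff] at h
      obtain ⟨m, hm⟩ := h
      rw [div_eq_iff hKC] at hm
      apply hdvd
      have h2 : (-(n : ℂ)) * (2 * Real.pi * Complex.I)
          = ((m : ℂ) * k) * (2 * Real.pi * Complex.I) := by linear_combination hm
      have h3 := mul_right_cancel₀ hπ h2
      have h4 : -n = m * (k : ℤ) := by exact_mod_cast h3
      exact ⟨-m, by linear_combination -h4⟩
    have hwne : w - 1 ≠ 0 := sub_ne_zero.mpr hw1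
    have hgeom : ∑ a ∈ Finset.range k, w ^ a = 0 := by
      rw [geom_sum_eq hw1 k, hwk]
      simp
    have hasum : ∑ a ∈ Finset.range k, (a : ℂ) * w ^ a = k / (w - 1) := by
      have h := aux_mul_sum w k
      rw [hwk, hgeom] at h
      rw [eq_div_iff hwne]
      linear_combination h
    have hmain : ∑ a ∈ Finset.range k, ((saw ((a : ℝ) / k) : ℝ) : ℂ) * w ^ a
        = 1 / (w - 1) + 1 / 2 := by
      have h1 : ∀ a ∈ Finset.range k, ((saw ((a : ℝ) / k) : ℝ) : ℂ) * w ^ a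
          = ((1 / k) * ((a : ℂ) * w ^ a) - (1 / 2) * w ^ a)
            + (if a = 0 then (1 / 2 : ℂ) else 0) := by
        intro a ha
        rw [saw_div_range k a hk (Finset.mem_range.mp ha)]
        rcases Nat.eq_zero_or_pos a with h | h
        · subst h; push_cast; simp
        · rw [if_neg h.ne', if_neg h.ne']
          push_cast
          field_simp
          ring
      rw [Finset.sum_congr rfl h1, Finset.sum_add_distrib, Finset.sum_sub_distrib,
        ← Finset.mul_sum, ← Finset.mul_sum, hasum, hgeom,
        Finset.sum_ite_eq' (Finset.range k) 0 (fun _ => (1 / 2 : ℂ))]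
      simp only [Finset.mem_range, hk, if_pos, mul_zero, sub_zero]
      field_simp
    rw [hmain]
    -- final trigonometric identity
    have hsin : Real.sin (Real.pi * n / k) ≠ 0 := by
      intro h
      rw [Real.sin_eq_zero_iff] at h
      obtain ⟨m, hm⟩ := h
      apply hdvd
      rw [eq_div_iff hKR] at hm
      have h3 : Real.pi * ((m : ℝ) * k) = Real.pi * n := by linear_combination hm
      have h4 := mul_left_cancel₀ Real.pi_ne_zero h3
      have h5 : (m : ℤ) * k = n := by exact_mod_cast h4
      exact ⟨m, by linear_combination -h5⟩
    set θ : ℂ := (Real.pi : ℂ) * n / k with hθ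
    have hcos : ((Real.cos (Real.pi * n / k) : ℝ) : ℂ) = Complex.cos θ := by
      rw [Complex.ofReal_cos, hθ]; congr 1; push_cast; ring
    have hsinC : ((Real.sin (Real.pi * n / k) : ℝ) : ℂ) = Complex.sin θ := by
      rw [Complex.ofReal_sin, hθ]; congr 1; push_cast; ring
    have hsinθ_ne : Complex.sin θ ≠ 0 := by
      rw [← hsinC]
      exact_mod_cast hsin
    rw [Complex.ofReal_div, hcos, hsinC]
    set u : ℂ := Complex.exp (θ * Complex.I) with hu
    set v : ℂ := Complex.exp (-θ * Complex.I) with hv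
    have huv : u * v = 1 := by
      rw [hu, hv, ← Complex.exp_add]; simp
    have hwv : w = v * v := by
      rw [hw, hv, ← Complex.exp_add]
      congr 1
      rw [hθ]
      ring
    have hcosθ : Complex.cos θ = (u + v) / 2 := rfl
    have hsinθ : Complex.sin θ = (v - u) * Complex.I / 2 := rfl
    have hvu : v - u ≠ 0 := by
      intro h
      have hv_eq : v = u := by linear_combination h
      apply hw1
      rw [hwv]
      linear_combination huv + v * hv_eq
    rw [hcosθ, hsinθ]
    rw [hwv] at hwne ⊢
    field_simp [show v ^ 2 - 1 ≠ 0 by rwa [sq]]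
    linear_combination (-2 * v) * huv
end

section
/- Let $k \in \mathbb{N}$ be even and let $f(n) = (-1)^n ((n/k))$. Then the DFT of $f$ satisfies $\widehat{f}(n) = -\frac{i}{2} \tan(\pi n/k)$ if $n \not\equiv k/2 \pmod{k}$, and $\widehat{f}(n) = 0$ if $n \equiv k/2 \pmod{k}$. -/
open scoped Classical

private lemma sum_mul_pow (z : ℂ) (K : ℕ) :
    (z - 1) * ∑ a ∈ Finset.range K, (a : ℂ) * z ^ a
      = ((K : ℂ) - 1) * z ^ K + 1 - ∑ a ∈ Finset.range K, z ^ a := by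
  induction K with
  | zero => simp
  | succ m ih =>
    rw [Finset.sum_range_succ, Finset.sum_range_succ]
    push_cast
    ring_nf
    ring_nf at ih
    linear_combination ih

theorem dft_alternating_saw (k : ℕ) (hk : 0 < k) (hke : Even k) (n : ℤ) :
    dft k (fun m => (((-1 : ℝ) ^ m * saw ((m : ℝ) / k) : ℝ) : ℂ)) n =
      if n ≡ ((k / 2 : ℕ) : ℤ) [ZMOD (k : ℤ)] then 0
      else -(Complex.I / 2) * ((Real.tan (Real.pi * n / k) : ℝ) : ℂ) := by
  obtain ⟨h, hh⟩ := hke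
  have hh2 : k = 2 * h := by omega
  have hhpos : 0 < h := by omega
  have hk2 : ((k / 2 : ℕ) : ℤ) = (h : ℤ) := by
    have : k / 2 = h := by omega
    rw [this]
  have hkC : (k : ℂ) ≠ 0 := Nat.cast_ne_zero.mpr hk.ne'
  have hpi : (Real.pi : ℂ) ≠ 0 := by
    exact_mod_cast Complex.ofReal_ne_zero.mpr Real.pi_ne_zero
  set w : ℂ := Complex.exp (-(2 * (Real.pi : ℂ) * Complex.I * n) / k) with hw
  set z : ℂ := -w with hz
  -- step 1: rewrite each term
  have hterm : ∀ a ∈ Finset.range k,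
      (fun m : ℤ => (((-1 : ℝ) ^ m * saw ((m : ℝ) / k) : ℝ) : ℂ)) (a : ℤ) *
        Complex.exp (-(2 * (Real.pi : ℂ) * Complex.I * (a : ℂ) * n) / k)
      = ((a : ℂ) / k - 1 / 2) * z ^ a + (if (0 : ℕ) = a then (1 / 2 : ℂ) else 0) := by
    intro a ha
    simp only [Finset.mem_range] at ha
    simp only [Int.cast_natCast, zpow_natCast]
    have hexp : Complex.exp (-(2 * (Real.pi : ℂ) * Complex.I * (a : ℂ) * n) / k) = w ^ a := by
      rw [← Complex.exp_nat_mul]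
      congr 1
      push_cast
      ring
    simp only [hexp]
    by_cases h0 : a = 0
    · subst h0
      have hs0 : saw 0 = 0 := by
        rw [saw, if_pos ⟨0, by simp⟩]
      simp [hs0]
    · rw [if_neg (fun hc => h0 hc.symm)]
      have h01 : (0 : ℝ) < (a : ℝ) / k := by
        apply div_pos
        · exact_mod_cast Nat.pos_of_ne_zero h0
        · exact_mod_cast hk
      have h11 : (a : ℝ) / k < 1 := by
        rw [div_lt_one (by exact_mod_cast hk)]
        exact_mod_cast ha
      have hsaw : saw ((a : ℝ) / k) = (a : ℝ) / k - 1 / 2 := by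
        rw [saw, if_neg, Int.fract_eq_self.mpr ⟨le_of_lt h01, h11⟩]
        rintro ⟨m, hm⟩
        have h0m : (0 : ℝ) < (m : ℝ) := hm ▸ h01
        have h1m : ((m : ℝ)) < 1 := hm ▸ h11
        have : (0 : ℤ) < m := by exact_mod_cast h0m
        have : m < 1 := by exact_mod_cast h1m
        omega
      rw [hsaw, hz]
      rw [neg_pow]
      push_cast
      ring
  rw [dft, Finset.sum_congr rfl hterm, Finset.sum_add_distrib, Finset.sum_ite_eq,
    if_pos (Finset.mem_range.mpr hk)]
  have hsplit : ∑ a ∈ Finset.range k, ((a : ℂ) / k - 1 / 2) * z ^ a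
      = (1 / k) * (∑ a ∈ Finset.range k, (a : ℂ) * z ^ a)
        - (1 / 2) * (∑ a ∈ Finset.range k, z ^ a) := by
    rw [Finset.mul_sum, Finset.mul_sum, ← Finset.sum_sub_distrib]
    exact Finset.sum_congr rfl (fun a _ => by ring)
  rw [hsplit]
  -- the key equivalence
  have hzexp : z = Complex.exp ((((k : ℂ) - 2 * n) * Real.pi * Complex.I) / k) := by
    have harg : (((k : ℂ) - 2 * n) * Real.pi * Complex.I) / k
        = (Real.pi * Complex.I) + (-(2 * (Real.pi : ℂ) * Complex.I * n) / k) := by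
      field_simp
      ring
    rw [hz, hw, harg, Complex.exp_add, Complex.exp_pi_mul_I]
    ring
  have hzone : z = 1 ↔ n ≡ ((k / 2 : ℕ) : ℤ) [ZMOD (k : ℤ)] := by
    rw [hzexp, Complex.exp_eq_one_iff, hk2]
    have hkh : (k : ℤ) = 2 * (h : ℤ) := by exact_mod_cast hh2
    have hIpi : (Real.pi : ℂ) * Complex.I ≠ 0 := mul_ne_zero hpi Complex.I_ne_zero
    constructor
    · rintro ⟨m, hm⟩
      rw [div_eq_iff hkC] at hm
      have hC : (((k : ℤ) - 2 * n : ℤ) : ℂ) = ((2 * m * k : ℤ) : ℂ) := by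
        apply mul_right_cancel₀ hIpi
        push_cast
        linear_combination hm
      have hZ : (k : ℤ) - 2 * n = 2 * m * k := by exact_mod_cast hC
      refine Int.modEq_iff_dvd.mpr ⟨m, ?_⟩
      linarith
    · intro hmod
      obtain ⟨m, hm⟩ := Int.modEq_iff_dvd.mp hmod
      refine ⟨m, ?_⟩
      rw [div_eq_iff hkC]
      have hZ : (k : ℤ) - 2 * n = 2 * m * k := by linarith
      have hC : ((k : ℂ) - 2 * n) = 2 * m * k := by exact_mod_cast hZ
      linear_combination (Real.pi : ℂ) * Complex.I * hC
  by_cases hcond : n ≡ ((k / 2 : ℕ) : ℤ) [ZMOD (k : ℤ)]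
  · rw [if_pos hcond]
    have hz1 : z = 1 := hzone.mpr hcond
    rw [hz1]
    simp only [one_pow, mul_one, Finset.sum_const, Finset.card_range, nsmul_eq_mul, mul_one]
    have hS1 : (∑ a ∈ Finset.range k, (a : ℂ)) * 2 = (k : ℂ) * ((k : ℂ) - 1) := by
      have h2 : (((∑ i ∈ Finset.range k, i) * 2 : ℕ) : ℂ) = ((k * (k - 1) : ℕ) : ℂ) := by
        rw [Finset.sum_range_id_mul_two k]
      push_cast [Nat.cast_sub (by omega : 1 ≤ k)] at h2
      linear_combination h2
    field_simp
    linear_combination hS1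
  · rw [if_neg hcond]
    have hzne : z ≠ 1 := fun hc => hcond (hzone.mp hc)
    have hzk : z ^ k = 1 := by
      rw [hz, Even.neg_pow ⟨h, hh⟩, hw, ← Complex.exp_nat_mul]
      have : (k : ℂ) * (-(2 * (Real.pi : ℂ) * Complex.I * n) / k) = (n : ℂ) * -(2 * Real.pi * Complex.I) := by
        field_simp
      rw [this, Complex.exp_int_mul, Complex.exp_neg, Complex.exp_two_pi_mul_I]
      simp
    have hS0 : (∑ a ∈ Finset.range k, z ^ a) = 0 := by
      rw [geom_sum_eq hzne, hzk, sub_self, zero_div]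
    have hd : z - 1 ≠ 0 := sub_ne_zero.mpr hzne
    have hS1 : (∑ a ∈ Finset.range k, (a : ℂ) * z ^ a) = k / (z - 1) := by
      have := sum_mul_pow z k
      rw [hzk, hS0] at this
      field_simp
      linear_combination this
    rw [hS0, hS1]
    -- now the trig part
    set x : ℂ := (Real.pi : ℂ) * n / k with hx
    set c : ℂ := Complex.cos x with hc
    set s : ℂ := Complex.sin x with hs
    have hcs : s ^ 2 + c ^ 2 = 1 := Complex.sin_sq_add_cos_sq x
    have hw2 : w = (c - s * Complex.I) * (c - s * Complex.I) := by
      have harg : -(2 * (Real.pi : ℂ) * Complex.I * n) / k = (-x) * Complex.I + (-x) * Complex.I := by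
        rw [hx]; ring
      rw [hw, harg, Complex.exp_add, Complex.exp_mul_I, Complex.cos_neg, Complex.sin_neg]
      ring
    have hzval : z = -(c ^ 2 - s ^ 2) + 2 * c * s * Complex.I := by
      rw [hz, hw2]
      linear_combination (-(s ^ 2)) * Complex.I_sq
    have hcne : c ≠ 0 := by
      intro hc0
      apply hzne
      have hcs' : s ^ 2 = 1 := by rw [hc0] at hcs; linear_combination hcs
      rw [hz, hw2, hc0]
      linear_combination (-(s ^ 2)) * Complex.I_sq + hcs'
    have htan : ((Real.tan (Real.pi * n / k) : ℝ) : ℂ) = s / c := by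
      rw [Complex.ofReal_tan, Complex.tan_eq_sin_div_cos]
      congr 1 <;> [rw [hs]; rw [hc]] <;> congr 1 <;> (rw [hx]; push_cast; ring)
    rw [htan]
    have hzm1 : z - 1 = -2 * c * (c - s * Complex.I) := by
      rw [hzval]
      linear_combination hcs
    field_simp [hd]
    linear_combination (c + Complex.I * s) * hzm1 - 2 * c * hcs + 2 * c * s ^ 2 * Complex.I_sq
end

section
/- Let $k \in \mathbb{N}$ be odd and define the $k$-periodic function $f(n) = (-1)^{n \bmod k}$ if $k \nmid n$ and $f(n) = 0$ if $k \mid n$, where $n \bmod k$ is the least nonnegative residue. Then $\widehat{f}(n) = i \tan(\pi n / k)$ for all $n \in \mathbb{Z}$. -/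
theorem dft_alternating_indicator (k : ℕ) (hk : 0 < k) (hko : Odd k) (n : ℤ) :
    dft k (fun m => if (k : ℤ) ∣ m then 0 else (((-1 : ℝ) ^ (m % (k : ℤ)) : ℝ) : ℂ)) n =
      Complex.I * ((Real.tan (Real.pi * n / k) : ℝ) : ℂ) := by
  have hkR : (k:ℝ) ≠ 0 := Nat.cast_ne_zero.mpr hk.ne'
  have hkC : (k:ℂ) ≠ 0 := Nat.cast_ne_zero.mpr hk.ne'
  set z : ℝ := Real.pi * n / k with hz
  set ω : ℂ := Complex.exp (-(2 * (Real.pi:ℂ) * Complex.I * n) / k) with hω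
  set a : ℂ := Complex.exp (-(z:ℂ) * Complex.I) with ha
  set b : ℂ := Complex.exp ((z:ℂ) * Complex.I) with hb
  have hcosR : Real.cos z ≠ 0 := by
    intro h
    rw [Real.cos_eq_zero_iff] at h
    obtain ⟨m, hm⟩ := h
    have hπ : (Real.pi : ℝ) ≠ 0 := Real.pi_ne_zero
    have h2 : (2 * n : ℝ) = (k : ℝ) * (2 * m + 1) := by
      field_simp [hz] at hm
      apply mul_left_cancel₀ hπ
      have hzk : z * k = Real.pi * n := by rw [hz, div_mul_cancel₀ _ hkR]
      linear_combination (k:ℝ) * hm - 2 * hzk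
    have h2' : (2 * n : ℤ) = (k : ℤ) * (2 * m + 1) := by exact_mod_cast h2
    have hodd : Odd ((k:ℤ) * (2 * m + 1)) :=
      (Int.odd_mul).mpr ⟨(Int.odd_coe_nat k).mpr hko, ⟨m, by ring⟩⟩
    obtain ⟨t, ht⟩ := hodd
    omega
  have hcosC : Complex.cos (z : ℂ) ≠ 0 := by
    rw [← Complex.ofReal_cos]
    exact_mod_cast hcosR
  have hinv : a * b = 1 := by
    rw [ha, hb, ← Complex.exp_add]; simp
  have hωz : ω = a ^ 2 := by
    have harg : -(2 * (Real.pi:ℂ) * Complex.I * n) / k = ((2:ℕ):ℂ) * (-(z:ℂ) * Complex.I) := by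
      push_cast [hz]
      ring
    rw [hω, harg, Complex.exp_nat_mul, ← ha]
  have hab : a + b ≠ 0 := by
    intro h
    apply hcosC
    rw [Complex.cos, ← ha, ← hb]
    linear_combination h / 2
  have hden : (1 : ℂ) + ω ≠ 0 := by
    have h1 : (1:ℂ) + ω = a * (a + b) := by
      rw [hωz]; linear_combination -hinv
    rw [h1, ha]
    exact mul_ne_zero (Complex.exp_ne_zero _) hab
  have hω1 : -ω ≠ 1 := by
    intro h
    apply hden
    linear_combination -h
  have hωk : ω ^ k = 1 := by
    rw [hω, ← Complex.exp_nat_mul]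
    have : (k:ℂ) * (-(2 * (Real.pi:ℂ) * Complex.I * n) / k) = (-n : ℤ) * (2 * (Real.pi:ℂ) * Complex.I) := by
      push_cast; field_simp
    rw [this, Complex.exp_int_mul_two_pi_mul_I]
  have hsum : dft k (fun m => if (k : ℤ) ∣ m then 0 else (((-1 : ℝ) ^ (m % (k : ℤ)) : ℝ) : ℂ)) n
      = (∑ c ∈ Finset.range k, (-ω) ^ c) - 1 := by
    rw [dft]
    have key : ∀ c ∈ Finset.range k,
        (if (k:ℤ) ∣ ((c:ℕ):ℤ) then (0:ℂ) else (((-1:ℝ) ^ (((c:ℕ):ℤ) % (k:ℤ)) : ℝ) : ℂ))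
          * Complex.exp (-(2*(Real.pi:ℂ)*Complex.I*(c:ℂ)*(n:ℂ))/(k:ℂ))
        = (-ω)^c - (if c = 0 then 1 else 0) := by
      intro c hc
      rw [Finset.mem_range] at hc
      have hexp : Complex.exp (-(2*(Real.pi:ℂ)*Complex.I*(c:ℂ)*(n:ℂ))/(k:ℂ)) = ω^c := by
        rw [hω, ← Complex.exp_nat_mul]
        congr 1
        ring
      by_cases h0 : c = 0
      · subst h0; simp [hexp]
      · have hdvd : ¬ (k:ℤ) ∣ ((c:ℕ):ℤ) := by
          rw [Int.natCast_dvd_natCast]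
          exact fun h => h0 (Nat.eq_zero_of_dvd_of_lt h hc)
        have hmod : ((c:ℕ):ℤ) % (k:ℤ) = (c:ℤ) := Int.emod_eq_of_lt (Int.natCast_nonneg c) (by exact_mod_cast hc)
        simp only [hdvd, if_false, hmod, hexp, h0]
        rw [zpow_natCast]
        push_cast
        rw [neg_pow]
        ring
    rw [Finset.sum_congr rfl key, Finset.sum_sub_distrib]
    congr 1
    simp [hk]
  rw [hsum, geom_sum_eq hω1, hko.neg_pow, hωk]
  rw [show ((Real.tan z : ℝ):ℂ) = Complex.tan (z:ℂ) from Complex.ofReal_tan z,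
    Complex.tan_eq_sin_div_cos, Complex.sin, Complex.cos, ← ha, ← hb, hωz]
  have ha0 : a ≠ 0 := Complex.exp_ne_zero _
  have hden' : a ^ 2 + 1 ≠ 0 := by
    intro h; apply hden; rw [hωz]; linear_combination h
  have h3 : -(a^2) - 1 ≠ 0 := fun h => hden' (by linear_combination -h)
  field_simp [hab, h3]
  rw [eq_div_iff (show b + a ≠ 0 from fun h => hab (by linear_combination h))]
  linear_combination ((a - b) * (a^2 + 1)) * Complex.I_mul_I + 2 * a * hinv
end

section
/- Let $k \in \mathbb{N}$ and $s \in \mathbb{C}$ with $\Re s > 1$. The DFT of the $k$-periodic function $f(n) = F(s, n/k)$, where $F$ is the periodic zeta function, satisfies $\widehat{f}(n) = k^{1-s} \zeta(s, \{n/k\})$ if $k \nmid n$, and $\widehat{f}(n) = k^{1-s} \zeta(s)$ if $k \mid n$. -/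
/-- The periodic zeta function `F(s,x) = ∑_{n ≥ 1} e^{2πinx} / n^s`. -/
noncomputable def pzeta (s : ℂ) (x : ℝ) : ℂ :=
  ∑' n : ℕ, Complex.exp (2 * (Real.pi : ℂ) * Complex.I * (n + 1) * x) / ((n : ℂ) + 1) ^ s

/-- The Hurwitz zeta function `ζ(s,x) = ∑_{n ≥ 0} (n+x)^{-s}` (for `0 < x ≤ 1`). -/
noncomputable def hzeta (s : ℂ) (x : ℝ) : ℂ :=
  ∑' n : ℕ, 1 / ((n : ℂ) + (x : ℂ)) ^ s

open Complex Finset Real in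
set_option maxHeartbeats 2000000 in
lemma key (k : ℕ) (hk : 0 < k) (s : ℂ) (hs : 1 < s.re) (n : ℤ) (R : ℕ)
    (hR1 : 1 ≤ R) (hRk : R ≤ k) (hmod : (k : ℤ) ∣ (R : ℤ) - n) :
    dft k (fun m => pzeta s ((m : ℝ) / k)) n = (k : ℂ) ^ (1 - s) * hzeta s ((R : ℝ) / k) := by
  have hk0 : (k : ℂ) ≠ 0 := Nat.cast_ne_zero.2 hk.ne'
  have hkR : (k : ℝ) ≠ 0 := Nat.cast_ne_zero.2 hk.ne'
  -- summability
  have hsummable : ∀ c : ℕ → ℝ,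
      Summable (fun m : ℕ => Complex.exp ((c m : ℂ) * Complex.I) / ((m : ℂ) + 1) ^ s) := by
    intro c
    have h0 : Summable (fun m : ℕ => 1 / ((m + 1 : ℕ) : ℝ) ^ s.re) :=
      (summable_nat_add_iff 1).mpr (Real.summable_one_div_nat_rpow.mpr hs)
    apply Summable.of_norm
    refine h0.congr fun m => ?_
    rw [norm_div, Complex.norm_exp_ofReal_mul_I]
    have : ((m : ℂ) + 1) = (((m + 1 : ℕ) : ℝ) : ℂ) := by push_cast; ring
    rw [this, Complex.norm_cpow_eq_rpow_re_of_pos (by positivity)]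
  -- Step A: rewrite each term of the dft
  have stepA : dft k (fun m => pzeta s ((m : ℝ) / k)) n
      = ∑ a ∈ Finset.range k,
          ∑' m : ℕ, Complex.exp (((2 * π * ((m : ℝ) + 1 - n) / k * a : ℝ) : ℂ) * Complex.I)
            / ((m : ℂ) + 1) ^ s := by
    unfold dft pzeta
    refine Finset.sum_congr rfl fun a _ => ?_
    rw [← tsum_mul_right]
    refine tsum_congr fun m => ?_
    rw [div_mul_eq_mul_div, ← Complex.exp_add]
    congr 1
    push_cast
    ring
  rw [stepA]
  -- Step B: swap sums
  rw [← Summable.tsum_finsetSum (fun a _ => hsummable _)]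
  -- Step C: character sum
  have char : ∀ c : ℤ, ∑ a ∈ Finset.range k,
      (Complex.exp (((2 * π * c / k : ℝ) : ℂ) * Complex.I)) ^ a
        = if (k : ℤ) ∣ c then (k : ℂ) else 0 := by
    intro c
    set ζ : ℂ := Complex.exp (((2 * π * c / k : ℝ) : ℂ) * Complex.I) with hζ
    have hζk : ζ ^ k = 1 := by
      rw [hζ, ← Complex.exp_nat_mul]
      rw [show (k : ℂ) * (((2 * π * c / k : ℝ) : ℂ) * Complex.I) = (c : ℂ) * (2 * π * Complex.I) by
        push_cast; field_simp]
      exact Complex.exp_int_mul_two_pi_mul_I c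
    split_ifs with hd
    · obtain ⟨t, ht⟩ := hd
      have hζ1 : ζ = 1 := by
        rw [hζ, show (((2 * π * c / k : ℝ) : ℂ) * Complex.I) = (t : ℂ) * (2 * π * Complex.I) by
          push_cast; rw [ht]; push_cast; field_simp]
        exact Complex.exp_int_mul_two_pi_mul_I t
      simp [hζ1]
    · have hζ1 : ζ ≠ 1 := by
        intro h
        rw [hζ, Complex.exp_eq_one_iff] at h
        obtain ⟨t, ht⟩ := h
        push_cast at ht
        field_simp at ht
        have hc : (c : ℂ) = t * k := by
          have hπ : (π : ℂ) ≠ 0 := Complex.ofReal_ne_zero.2 Real.pi_ne_zero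
          have h3 : (2 * (π : ℂ) * Complex.I) * c = (2 * π * Complex.I) * (t * k) := by
            linear_combination (2 * (π : ℂ) * Complex.I) * ht
          exact mul_left_cancel₀ (by simp [hπ, Complex.I_ne_zero]) h3
        exact hd ⟨t, by exact_mod_cast (by rw [hc]; ring : (c : ℂ) = k * t)⟩
      rw [geom_sum_eq hζ1, hζk, sub_self, zero_div]
  have stepC : (∑' m : ℕ, ∑ a ∈ Finset.range k,
      Complex.exp (((2 * π * ((m : ℝ) + 1 - n) / k * a : ℝ) : ℂ) * Complex.I) / ((m : ℂ) + 1) ^ s)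
      = ∑' m : ℕ, (if (k : ℤ) ∣ ((m : ℤ) + 1 - n) then (k : ℂ) else 0) / ((m : ℂ) + 1) ^ s := by
    refine tsum_congr fun m => ?_
    rw [← Finset.sum_div]
    congr 1
    rw [← char ((m : ℤ) + 1 - n)]
    refine Finset.sum_congr rfl fun a _ => ?_
    rw [← Complex.exp_nat_mul]
    congr 1
    push_cast
    ring
  rw [stepC]
  -- Step D: reindex
  set g : ℕ → ℂ := fun m => (if (k : ℤ) ∣ ((m : ℤ) + 1 - n) then (k : ℂ) else 0) / ((m : ℂ) + 1) ^ s
    with hg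
  set i : ℕ → ℕ := fun j => k * j + (R - 1) with hi
  have hiinj : Function.Injective i := by
    intro a b hab
    simp only [hi] at hab
    exact Nat.eq_of_mul_eq_mul_left hk (Nat.add_right_cancel hab)
  have hsupp : Function.support g ⊆ Set.range i := by
    intro m hm
    have hdvd : (k : ℤ) ∣ ((m : ℤ) + 1 - n) := by
      by_contra h
      simp [hg, h] at hm
    have h2 : (k : ℤ) ∣ ((m : ℤ) + 1 - R) := by
      have := dvd_sub hdvd hmod
      simpa using this
    obtain ⟨v, hv⟩ := h2
    have hv0 : 0 ≤ v := by
      by_contra h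
      push_neg at h
      have h1 : v ≤ -1 := by omega
      have h2 : (k : ℤ) * v ≤ (k : ℤ) * (-1) :=
        mul_le_mul_of_nonneg_left h1 (by positivity)
      omega
    refine ⟨v.toNat, ?_⟩
    simp only [hi]
    have h4 : ((k * v.toNat + (R - 1) : ℕ) : ℤ) = (m : ℤ) := by
      push_cast [Nat.cast_sub hR1, Int.toNat_of_nonneg hv0]
      linarith [hv]
    exact_mod_cast h4
  rw [← hiinj.tsum_eq hsupp]
  have stepE : ∀ j : ℕ, g (i j)
      = (k : ℂ) ^ (1 - s) * (1 / ((j : ℂ) + (((R : ℝ) / k : ℝ) : ℂ)) ^ s) := by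
    intro j
    have hdvd : (k : ℤ) ∣ ((i j : ℤ) + 1 - n) := by
      have : ((i j : ℤ) + 1 - n) = (k : ℤ) * j + ((R : ℤ) - n) := by
        simp only [hi]; push_cast [Nat.cast_sub hR1]; ring
      rw [this]
      exact dvd_add ⟨j, rfl⟩ hmod
    rw [hg]
    simp only [hdvd, if_true]
    have hbase : ((i j : ℂ) + 1) = ((k : ℝ) : ℂ) * ((((j : ℝ) + (R : ℝ) / k) : ℝ) : ℂ) := by
      simp only [hi]
      push_cast [Nat.cast_sub hR1]
      field_simp
      ring
    rw [hbase, Complex.mul_cpow_ofReal_nonneg (Nat.cast_nonneg k) (by positivity)]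
    have hX : ((((j : ℝ) + (R : ℝ) / k) : ℝ) : ℂ) ^ s ≠ 0 := by
      rw [Ne, Complex.cpow_eq_zero_iff]
      push_neg
      intro h
      exfalso
      rw [Complex.ofReal_eq_zero] at h
      have : (0 : ℝ) < (j : ℝ) + (R : ℝ) / k := by positivity
      linarith
    have hks : ((k : ℝ) : ℂ) ^ s ≠ 0 := by
      rw [Ne, Complex.cpow_eq_zero_iff]
      push_neg
      intro h
      exact absurd h (by exact_mod_cast hk0)
    rw [Complex.cpow_sub _ _ hk0, Complex.cpow_one]
    rw [show (((j : ℝ) + (R : ℝ) / k : ℝ) : ℂ) = (j : ℂ) + (((R : ℝ) / k : ℝ) : ℂ) by push_cast; ring]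
      at hX ⊢
    rw [show ((k : ℝ) : ℂ) = (k : ℂ) by push_cast; ring] at hks ⊢
    field_simp
  calc ∑' j : ℕ, g (i j) = ∑' j : ℕ, (k : ℂ) ^ (1 - s) * (1 / ((j : ℂ) + (((R : ℝ) / k : ℝ) : ℂ)) ^ s) :=
        tsum_congr stepE
    _ = (k : ℂ) ^ (1 - s) * hzeta s ((R : ℝ) / k) := by rw [tsum_mul_left]; rfl

open Complex Finset Real in
theorem dft_pzeta (k : ℕ) (hk : 0 < k) (s : ℂ) (hs : 1 < s.re) (n : ℤ) :
    dft k (fun m => pzeta s ((m : ℝ) / k)) n =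
      if (k : ℤ) ∣ n then (k : ℂ) ^ (1 - s) * hzeta s 1
      else (k : ℂ) ^ (1 - s) * hzeta s (Int.fract ((n : ℝ) / k)) := by
  have hkR : (k : ℝ) ≠ 0 := Nat.cast_ne_zero.2 hk.ne'
  by_cases hd : (k : ℤ) ∣ n
  · rw [if_pos hd, key k hk s hs n k hk le_rfl (dvd_sub dvd_rfl hd), div_self hkR]
  · rw [if_neg hd]
    have hkz : (0 : ℤ) < (k : ℤ) := by exact_mod_cast hk
    have hnk0 : 0 ≤ n % (k : ℤ) := Int.emod_nonneg n hkz.ne'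
    have hpos : 0 < n % (k : ℤ) :=
      lt_of_le_of_ne hnk0 (fun h => hd (Int.dvd_of_emod_eq_zero h.symm))
    have hlt : n % (k : ℤ) < k := Int.emod_lt_of_pos n hkz
    set R : ℕ := (n % (k : ℤ)).toNat with hR
    have hcast : (R : ℤ) = n % (k : ℤ) := Int.toNat_of_nonneg hnk0
    have hR1 : 1 ≤ R := by omega
    have hRk : R ≤ k := by omega
    have hmod : (k : ℤ) ∣ (R : ℤ) - n := ⟨-(n / k), by rw [hcast, Int.emod_def]; ring⟩
    rw [key k hk s hs n R hR1 hRk hmod]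
    congr 2
    have hz : (n : ℤ) = (k : ℤ) * (n / (k : ℤ)) + (R : ℤ) := by
      rw [hcast]; exact (Int.mul_ediv_add_emod n k).symm
    have hsplit : (n : ℝ) / k = ((n / (k : ℤ) : ℤ) : ℝ) + ((R : ℤ) : ℝ) / k := by
      have h := congrArg (fun z : ℤ => (z : ℝ)) hz
      push_cast at h
      field_simp
      push_cast
      linarith
    rw [hsplit, Int.fract_intCast_add, Int.fract_eq_self.2 ⟨by positivity, by
      rw [div_lt_one (by exact_mod_cast hkz)]; exact_mod_cast hcast ▸ hlt⟩]
    norm_cast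
end
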